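/- Let n ≥ 1 and N ≥ 0 be integers. Then every trigonometric polynomial W of degree at most N satisfies ∫₀¹ |W(x) − 𝓑_{n+1}(x)| dx ≥ |E_{n+1}(θ_n)|/(2N+2)^{n+1}. -/

import Mathlib

open MeasureTheory

/-- The `m`-th Bernoulli polynomial evaluated at a real number `x`,
with the generating function `t e^{xt}/(e^t - 1) = ∑ B_m(x) t^m / m!`. -/
noncomputable def bernoulliPoly (m : ℕ) (x : ℝ) : ℝ :=
  Polynomial.aeval x (Polynomial.bernoulli m)

/-- The `m`-th Bernoulli periodic function `𝓑_m(x) = B_m(x - ⌊x⌋)`. -/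
noncomputable def bernoulliPer (m : ℕ) (x : ℝ) : ℝ :=
  bernoulliPoly m (x - ⌊x⌋)

/-- `f : ℝ → ℂ` is a trigonometric polynomial of degree at most `N`:
`f x = ∑_{k=-N}^{N} c_k e^{2πikx}`. -/
def IsTrigPoly (N : ℕ) (f : ℝ → ℂ) : Prop :=
  ∃ c : ℤ → ℂ, ∀ x : ℝ,
    f x = ∑ k ∈ Finset.Icc (-(N : ℤ)) (N : ℤ),
      c k * Complex.exp (2 * (Real.pi : ℂ) * Complex.I * (k : ℂ) * (x : ℂ))

/-- The `m`-th Euler polynomial, via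
`E_m(x) = (2^{m+1}/(m+1)) (B_{m+1}((x+1)/2) - B_{m+1}(x/2))`. -/
noncomputable def eulerPoly (m : ℕ) (x : ℝ) : ℝ :=
  (2 ^ (m + 1) / ((m : ℝ) + 1)) *
    (bernoulliPoly (m + 1) ((x + 1) / 2) - bernoulliPoly (m + 1) (x / 2))

/-- `θ_n = 0` if `n` is even, `1/2` if `n` is odd. -/
noncomputable def theta (n : ℕ) : ℝ := if Even n then 0 else 1 / 2

lemma bp_continuous (k : ℕ) : Continuous (bernoulliPoly k) := by
  exact
    (Polynomial.continuous_aeval (R := ℚ) (Polynomial.bernoulli k) (A := ℝ))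

lemma bp_zero (x : ℝ) : bernoulliPoly 0 x = 1 := by
  simp [bernoulliPoly]

lemma bp_hasDerivAt (k : ℕ) (x : ℝ) :
    HasDerivAt (bernoulliPoly (k + 1)) (((k : ℝ) + 1) * bernoulliPoly k x) x := by
  have h := (Polynomial.bernoulli (k + 1)).hasDerivAt_aeval (𝕜 := ℝ) x
  rw [Polynomial.derivative_bernoulli_add_one] at h
  show HasDerivAt (fun x => bernoulliPoly (k + 1) x) _ x
  simpa [bernoulliPoly, Polynomial.aeval_def] using h

lemma bp_one_add (k : ℕ) (x : ℝ) :
    bernoulliPoly (k + 1) (1 + x) = bernoulliPoly (k + 1) x + ((k : ℝ) + 1) * x ^ k := by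
  have hpoly : (Polynomial.bernoulli (k + 1)).comp (1 + Polynomial.X) =
      Polynomial.bernoulli (k + 1) + Polynomial.C ((k : ℚ) + 1) * Polynomial.X ^ k := by
    apply Polynomial.funext
    intro r
    simp only [Polynomial.eval_comp, Polynomial.eval_add, Polynomial.eval_one,
      Polynomial.eval_X, Polynomial.bernoulli_eval_one_add, Polynomial.eval_mul,
      Polynomial.eval_C, Polynomial.eval_pow]
    push_cast
    ring_nf
  have h := congrArg (fun p => Polynomial.aeval (R := ℚ) x p) hpoly
  simp only [Polynomial.aeval_comp, map_add, map_mul, map_pow, Polynomial.aeval_X,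
    Polynomial.aeval_C, map_one] at h
  simpa [bernoulliPoly] using h

lemma bp_succ_ne (k : ℕ) : ((k : ℝ) + 1) ≠ 0 := by positivity

lemma bp_antideriv (k : ℕ) (x : ℝ) :
    HasDerivAt (fun y => bernoulliPoly (k + 1) y / ((k : ℝ) + 1)) (bernoulliPoly k x) x := by
  have h := (bp_hasDerivAt k x).div_const ((k : ℝ) + 1)
  simpa [mul_div_assoc, mul_div_cancel_left₀ _ (bp_succ_ne k)] using h

lemma bp_integral (k : ℕ) (c d : ℝ) :
    ∫ x in c..d, bernoulliPoly k x
      = (bernoulliPoly (k + 1) d - bernoulliPoly (k + 1) c) / ((k : ℝ) + 1) := by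
  rw [intervalIntegral.integral_eq_sub_of_hasDerivAt (fun x _ => bp_antideriv k x)
    ((bp_continuous k).intervalIntegrable c d)]
  ring

lemma bp_nat_eval (k q : ℕ) :
    bernoulliPoly (k + 1) (q : ℝ)
      = bernoulliPoly (k + 1) 0 + ((k : ℝ) + 1) * ∑ i ∈ Finset.range q, (i : ℝ) ^ k := by
  induction q with
  | zero => simp
  | succ q ih =>
    have h := bp_one_add k (q : ℝ)
    push_cast
    rw [add_comm ((q : ℝ)) 1, h, ih, Finset.sum_range_succ]
    ring

lemma raabe (q : ℕ) (hq : 0 < q) : ∀ (k : ℕ) (x : ℝ),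
    (q : ℝ) ^ k * ∑ i ∈ Finset.range q, bernoulliPoly k (x + (i : ℝ) / q)
      = q * bernoulliPoly k ((q : ℝ) * x) := by
  have hq0 : (q : ℝ) ≠ 0 := by positivity
  intro k
  induction k with
  | zero => intro x; simp [bp_zero]
  | succ k ih =>
    intro x
    set L : ℝ → ℝ := fun x =>
      (q : ℝ) ^ (k + 1) * ∑ i ∈ Finset.range q, bernoulliPoly (k + 1) (x + (i : ℝ) / q)
        - (q : ℝ) * bernoulliPoly (k + 1) ((q : ℝ) * x) with hLdef
    have hL : ∀ y : ℝ, HasDerivAt L 0 y := by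
      intro y
      have hsum : HasDerivAt
          (fun x => ∑ i ∈ Finset.range q, bernoulliPoly (k + 1) (x + (i : ℝ) / q))
          (∑ i ∈ Finset.range q, ((k : ℝ) + 1) * bernoulliPoly k (y + (i : ℝ) / q)) y := by
        apply HasDerivAt.fun_sum
        intro i _
        have h1 : HasDerivAt (fun x : ℝ => x + (i : ℝ) / q) 1 y :=
          (hasDerivAt_id y).add_const _
        exact ((bp_hasDerivAt k (y + (i : ℝ) / q)).comp y h1).congr_deriv (mul_one _)
      have hmul : HasDerivAt (fun x : ℝ => bernoulliPoly (k + 1) ((q : ℝ) * x))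
          (((k : ℝ) + 1) * bernoulliPoly k ((q : ℝ) * y) * q) y := by
        have h1 : HasDerivAt (fun x : ℝ => (q : ℝ) * x) (q : ℝ) y := by
          simpa using (hasDerivAt_id y).const_mul (q : ℝ)
        exact (bp_hasDerivAt k ((q : ℝ) * y)).comp y h1
      have := ((hsum.const_mul ((q : ℝ) ^ (k + 1))).sub (hmul.const_mul (q : ℝ)))
      refine this.congr_deriv (Eq.symm ?_)
      rw [← Finset.mul_sum]
      linear_combination (-(((k : ℝ) + 1) * (q : ℝ))) * ih y
    have hconst : ∀ x y : ℝ, L x = L y :=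
      is_const_of_deriv_eq_zero (fun z => (hL z).differentiableAt) (fun z => (hL z).deriv)
    have hint : ∫ x in (0:ℝ)..1, L x = L 0 := by
      rw [intervalIntegral.integral_congr (g := fun _ => L 0) (fun x _ => hconst x 0)]
      simp [hLdef]
    have hIsum : ∀ c : ℝ, ∫ x in (0:ℝ)..1, bernoulliPoly (k + 1) (x + c) = c ^ (k + 1) := by
      intro c
      rw [intervalIntegral.integral_comp_add_right (fun y => bernoulliPoly (k + 1) y) c,
        zero_add, bp_integral (k + 1) c (1 + c), bp_one_add (k + 1) c]
      have h0 : ((k + 1 : ℕ) : ℝ) + 1 ≠ 0 := bp_succ_ne (k + 1)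
      field_simp
      ring
    have hImul : ∫ x in (0:ℝ)..1, bernoulliPoly (k + 1) ((q : ℝ) * x)
        = (∑ i ∈ Finset.range q, (i : ℝ) ^ (k + 1)) / q := by
      have had : ∀ x : ℝ, HasDerivAt
          (fun y => bernoulliPoly (k + 2) ((q : ℝ) * y) / (((k : ℝ) + 2) * q))
          (bernoulliPoly (k + 1) ((q : ℝ) * x)) x := by
        intro x
        have h1 : HasDerivAt (fun y : ℝ => (q : ℝ) * y) (q : ℝ) x := by
          simpa using (hasDerivAt_id x).const_mul (q : ℝ)
        have h2 := ((bp_hasDerivAt (k + 1) ((q : ℝ) * x)).comp x h1).div_const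
          (((k : ℝ) + 2) * q)
        have hne : ((k : ℝ) + 2) * q ≠ 0 := by positivity
        refine h2.congr_deriv (Eq.symm ?_)
        push_cast
        field_simp
        ring
      rw [intervalIntegral.integral_eq_sub_of_hasDerivAt (fun x _ => had x)
        (((bp_continuous (k + 1)).comp (continuous_const.mul continuous_id)).intervalIntegrable 0 1)]
      rw [mul_one, mul_zero]
      have h3 := bp_nat_eval (k + 1) q
      push_cast at h3 ⊢
      rw [h3]
      have hne : ((k : ℝ) + 2) ≠ 0 := by positivity
      field_simp
      ring
    have hint2 : ∫ x in (0:ℝ)..1, L x = 0 := by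
      rw [hLdef]
      have hi1 : IntervalIntegrable (fun x =>
          (q : ℝ) ^ (k + 1) * ∑ i ∈ Finset.range q, bernoulliPoly (k + 1) (x + (i : ℝ) / q))
          volume 0 1 := by
        apply Continuous.intervalIntegrable
        exact continuous_const.mul (continuous_finset_sum _ fun i _ =>
          (bp_continuous (k + 1)).comp (continuous_id.add continuous_const))
      have hi2 : IntervalIntegrable (fun x => (q : ℝ) * bernoulliPoly (k + 1) ((q : ℝ) * x))
          volume 0 1 := by
        apply Continuous.intervalIntegrable
        exact continuous_const.mul ((bp_continuous (k + 1)).comp (continuous_const.mul continuous_id))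
      rw [intervalIntegral.integral_sub hi1 hi2,
        intervalIntegral.integral_const_mul, intervalIntegral.integral_const_mul,
        intervalIntegral.integral_finset_sum
          (f := fun (i : ℕ) (x : ℝ) => bernoulliPoly (k + 1) (x + (i : ℝ) / q))
          (fun i _ =>
            ((bp_continuous (k + 1)).comp (continuous_id.add continuous_const)).intervalIntegrable 0 1)]
      have : ∀ i ∈ Finset.range q,
          (∫ x in (0:ℝ)..1, bernoulliPoly (k + 1) (x + (i : ℝ) / q)) = ((i : ℝ) / q) ^ (k + 1) :=
        fun i _ => hIsum _
      rw [Finset.sum_congr rfl this, hImul]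
      rw [Finset.mul_sum]
      have : ∀ i ∈ Finset.range q,
          (q : ℝ) ^ (k + 1) * ((i : ℝ) / q) ^ (k + 1) = (i : ℝ) ^ (k + 1) := by
        intro i _
        rw [div_pow]
        field_simp
      rw [Finset.sum_congr rfl this]
      field_simp
      ring
    have hL0 : L 0 = 0 := by rw [← hint, hint2]
    have := hconst x 0
    rw [hL0] at this
    have hx : L x = 0 := this
    rw [hLdef] at hx
    simp only at hx
    linarith [hx]

lemma bper_eq_fract (k : ℕ) : bernoulliPer k = fun x => bernoulliPoly k (Int.fract x) := rfl

lemma bper_eq (k : ℕ) {x : ℝ} (h0 : 0 ≤ x) (h1 : x < 1) :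
    bernoulliPer k x = bernoulliPoly k x := by
  rw [bernoulliPer, Int.floor_eq_zero_iff.mpr ⟨h0, h1⟩]
  simp

lemma bper_periodic (k : ℕ) : Function.Periodic (bernoulliPer k) 1 := by
  intro x
  rw [bper_eq_fract]
  simp [Int.fract_add_one]

lemma bp_endpoints (k : ℕ) : bernoulliPoly (k + 2) 1 = bernoulliPoly (k + 2) 0 := by
  have h := bp_one_add (k + 1) 0
  simpa using h

lemma bper_continuous (k : ℕ) : Continuous (bernoulliPer (k + 2)) := by
  rw [bper_eq_fract]
  exact ContinuousOn.comp_fract'' ((bp_continuous (k + 2)).continuousOn)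
    (bp_endpoints k).symm

lemma bper_measurable (k : ℕ) : Measurable (bernoulliPer k) := by
  rw [bper_eq_fract]
  exact (bp_continuous k).measurable.comp measurable_fract

lemma bper_bound (k : ℕ) : ∃ C : ℝ, ∀ x, ‖bernoulliPer k x‖ ≤ C := by
  obtain ⟨C, hC⟩ := (isCompact_Icc (a := (0:ℝ)) (b := 1)).exists_bound_of_continuousOn
    (bp_continuous k).continuousOn
  refine ⟨C, fun x => ?_⟩
  rw [bper_eq_fract]
  exact hC _ ⟨(Int.fract_nonneg x), le_of_lt (Int.fract_lt_one x)⟩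

lemma II_of_bdd {E : Type*} [NormedAddCommGroup E] {f : ℝ → E}
    (hm : AEStronglyMeasurable f volume) {C : ℝ} (hb : ∀ x, ‖f x‖ ≤ C) (c d : ℝ) :
    IntervalIntegrable f volume c d := by
  rw [intervalIntegrable_iff]
  exact Measure.integrableOn_of_bounded measure_Ioc_lt_top.ne hm (ae_of_all _ hb)

lemma bper_II (k : ℕ) (c d : ℝ) : IntervalIntegrable (bernoulliPer k) volume c d := by
  obtain ⟨C, hC⟩ := bper_bound k
  exact II_of_bdd (bper_measurable k).aestronglyMeasurable hC c d

lemma bper_hasDerivWithinAt (k : ℕ) (x : ℝ) :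
    HasDerivWithinAt (fun y => bernoulliPer (k + 2) y / ((k : ℝ) + 2))
      (bernoulliPer (k + 1) x) (Set.Ioi x) x := by
  set n : ℤ := ⌊x⌋ with hn
  have hg : HasDerivAt (fun y => bernoulliPoly (k + 2) (y - (n : ℝ)) / ((k : ℝ) + 2))
      (bernoulliPoly (k + 1) (x - (n : ℝ))) x := by
    have h1 : HasDerivAt (fun y : ℝ => y - (n : ℝ)) 1 x := (hasDerivAt_id x).sub_const _
    have h2 := ((bp_hasDerivAt (k + 1) (x - (n : ℝ))).comp x h1).div_const ((k : ℝ) + 2)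
    refine h2.congr_deriv (Eq.symm ?_)
    push_cast
    field_simp
    ring
  have hx1 : x < (n : ℝ) + 1 := Int.lt_floor_add_one x
  have hmem : Set.Ioo x ((n : ℝ) + 1) ∈ nhdsWithin x (Set.Ioi x) :=
    Ioo_mem_nhdsGT_of_mem ⟨le_refl x, hx1⟩
  have heq : Set.EqOn (fun y => bernoulliPer (k + 2) y / ((k : ℝ) + 2))
      (fun y => bernoulliPoly (k + 2) (y - (n : ℝ)) / ((k : ℝ) + 2))
      (Set.Ioo x ((n : ℝ) + 1)) := by
    intro y hy
    have hfl : ⌊y⌋ = n := by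
      rw [Int.floor_eq_iff]
      exact ⟨le_trans (Int.floor_le x) (le_of_lt hy.1), hy.2⟩
    simp only [bernoulliPer, hfl]
  have hper_x : bernoulliPer (k + 2) x / ((k : ℝ) + 2)
      = bernoulliPoly (k + 2) (x - (n : ℝ)) / ((k : ℝ) + 2) := by
    simp [bernoulliPer, hn]
  exact (hg.hasDerivWithinAt (s := Set.Ioi x)).congr_of_eventuallyEq
    (Filter.eventuallyEq_of_mem hmem heq) hper_x

lemma bper_integral (k : ℕ) {c d : ℝ} (hcd : c ≤ d) :
    ∫ x in c..d, bernoulliPer (k + 1) x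
      = (bernoulliPer (k + 2) d - bernoulliPer (k + 2) c) / ((k : ℝ) + 2) := by
  have h := intervalIntegral.integral_eq_sub_of_hasDeriv_right_of_le hcd
    (Continuous.continuousOn ((bper_continuous k).div_const _))
    (fun x _ => bper_hasDerivWithinAt k x)
    (bper_II (k + 1) c d)
  rw [h]
  ring

noncomputable def sqw (M : ℕ) (θ : ℝ) (x : ℝ) : ℝ := (-1 : ℝ) ^ ⌊2 * (M : ℝ) * x - θ⌋

lemma sqw_abs (M : ℕ) (θ x : ℝ) : |sqw M θ x| = 1 := by
  rw [sqw]
  rcases Int.even_or_odd ⌊2 * (M : ℝ) * x - θ⌋ with h | h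
  · rw [h.neg_one_zpow]; norm_num
  · rw [Odd.neg_one_zpow h]; norm_num

lemma sqw_measurable (M : ℕ) (θ : ℝ) : Measurable (sqw M θ) := by
  have h1 : Measurable fun x : ℝ => ⌊2 * (M : ℝ) * x - θ⌋ :=
    Int.measurable_floor.comp ((continuous_const.mul continuous_id).sub continuous_const).measurable
  exact (Measurable.of_discrete (f := fun z : ℤ => (-1 : ℝ) ^ z)).comp h1

lemma sqw_antiperiodic (M : ℕ) (hM : 0 < M) (θ x : ℝ) :
    sqw M θ (x + 1 / (2 * (M : ℝ))) = -sqw M θ x := by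
  have hM0 : (2 : ℝ) * M ≠ 0 := by positivity
  have harg : 2 * (M : ℝ) * (x + 1 / (2 * (M : ℝ))) - θ = (2 * (M : ℝ) * x - θ) + 1 := by
    field_simp
    ring
  rw [sqw, harg]
  have : ⌊2 * (M : ℝ) * x - θ + 1⌋ = ⌊2 * (M : ℝ) * x - θ⌋ + 1 := by
    exact_mod_cast Int.floor_add_intCast (2 * (M : ℝ) * x - θ) 1
  rw [this, zpow_add_one₀ (by norm_num : (-1 : ℝ) ≠ 0)]
  simp [sqw]

lemma sqw_periodic (M : ℕ) (θ : ℝ) : Function.Periodic (sqw M θ) 1 := by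
  intro x
  have harg : 2 * (M : ℝ) * (x + 1) - θ = (2 * (M : ℝ) * x - θ) + ((2 * M : ℤ) : ℝ) := by
    push_cast
    ring
  rw [sqw, harg, Int.floor_add_intCast, zpow_add₀ (by norm_num : (-1 : ℝ) ≠ 0)]
  have : ((-1 : ℝ)) ^ ((2 * M : ℤ)) = 1 := by
    rw [show ((2 * M : ℤ)) = ((2 * M : ℕ) : ℤ) by push_cast; ring, zpow_natCast]
    exact Even.neg_one_pow ⟨M, by ring⟩
  rw [this, mul_one]
  rfl

lemma sqw_value (M : ℕ) (hM : 0 < M) (θ : ℝ) (j : ℕ) {x : ℝ}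
    (h1 : θ / (2 * M) + (j : ℝ) / (2 * M) ≤ x)
    (h2 : x < θ / (2 * M) + ((j : ℝ) + 1) / (2 * M)) :
    sqw M θ x = (-1 : ℝ) ^ j := by
  have hM0 : (0 : ℝ) < 2 * M := by positivity
  have hfl : ⌊2 * (M : ℝ) * x - θ⌋ = (j : ℤ) := by
    rw [Int.floor_eq_iff]
    constructor
    · push_cast
      rw [← add_div, div_le_iff₀ hM0] at h1
      linarith
    · push_cast
      rw [← add_div, lt_div_iff₀ hM0] at h2
      linarith
  rw [sqw, hfl, zpow_natCast]

lemma sqw_exp_II (M : ℕ) (θ : ℝ) (g : ℝ → ℂ) (hg : Continuous g) {C : ℝ}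
    (hC : ∀ x, ‖g x‖ ≤ C) (c d : ℝ) :
    IntervalIntegrable (fun x => (sqw M θ x : ℂ) * g x) volume c d := by
  apply II_of_bdd (C := C)
  · exact ((Complex.measurable_ofReal.comp (sqw_measurable M θ)).mul hg.measurable).aestronglyMeasurable
  · intro x
    rw [norm_mul]
    have h1 : ‖((sqw M θ x : ℝ) : ℂ)‖ = 1 := by
      rw [Complex.norm_real, Real.norm_eq_abs, sqw_abs]
    rw [h1, one_mul]
    exact hC x

lemma exp_unit_norm (t : ℝ) (k : ℤ) :
    ‖Complex.exp (2 * (Real.pi : ℂ) * Complex.I * (k : ℂ) * (t : ℂ))‖ = 1 := by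
  rw [Complex.norm_exp]
  have : (2 * (Real.pi : ℂ) * Complex.I * (k : ℂ) * (t : ℂ)).re = 0 := by
    simp [Complex.mul_re, Complex.mul_im]
  rw [this, Real.exp_zero]

lemma sqw_orthogonal (M : ℕ) (hM : 0 < M) (θ : ℝ) (k : ℤ) (hk : |k| < M) :
    ∫ x in (0:ℝ)..1,
      (sqw M θ x : ℂ) * Complex.exp (2 * (Real.pi : ℂ) * Complex.I * (k : ℂ) * (x : ℂ)) = 0 := by
  set h : ℝ → ℂ := fun x =>
    (sqw M θ x : ℂ) * Complex.exp (2 * (Real.pi : ℂ) * Complex.I * (k : ℂ) * (x : ℂ)) with hdef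
  have hM0 : (M : ℝ) ≠ 0 := by positivity
  have hper : Function.Periodic h 1 := by
    intro x
    rw [hdef]
    simp only
    rw [sqw_periodic M θ x]
    congr 1
    rw [show (2 * (Real.pi : ℂ) * Complex.I * (k : ℂ) * ((x + 1 : ℝ) : ℂ))
        = 2 * (Real.pi : ℂ) * Complex.I * (k : ℂ) * (x : ℂ) + (k : ℂ) * (2 * Real.pi * Complex.I)
        by push_cast; ring]
    rw [Complex.exp_add, Complex.exp_int_mul_two_pi_mul_I, mul_one]
  have hint : ∀ c d : ℝ, IntervalIntegrable h volume c d := by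
    intro c d
    apply sqw_exp_II M θ _ (by continuity) (C := 1) (fun x => le_of_eq (exp_unit_norm x k))
  set c : ℝ := 1 / (2 * (M : ℝ)) with hc
  set E : ℂ := Complex.exp (2 * (Real.pi : ℂ) * Complex.I * (k : ℂ) * (c : ℂ)) with hE
  have key : ∫ x in (0:ℝ)..1, h x = -E * ∫ x in (0:ℝ)..1, h x := by
    have h1 : ∫ x in c..(c + 1), h x = ∫ x in (0:ℝ)..1, h x := by
      have := hper.intervalIntegral_add_eq c 0
      simpa using this
    have h2 : ∫ x in c..(c + 1), h x = ∫ x in (0:ℝ)..1, h (x + c) := by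
      rw [intervalIntegral.integral_comp_add_right h c, zero_add, add_comm 1 c]
    have h3 : ∀ x : ℝ, h (x + c) = -E * h x := by
      intro x
      rw [hdef]
      simp only
      rw [sqw_antiperiodic M hM θ x]
      push_cast
      rw [show 2 * (Real.pi : ℂ) * Complex.I * (k : ℂ) * ((x : ℂ) + (c : ℂ))
          = 2 * (Real.pi : ℂ) * Complex.I * (k : ℂ) * (x : ℂ)
            + 2 * (Real.pi : ℂ) * Complex.I * (k : ℂ) * (c : ℂ) by ring]
      rw [Complex.exp_add]
      ring
    calc ∫ x in (0:ℝ)..1, h x = ∫ x in (0:ℝ)..1, h (x + c) := by rw [← h2, h1]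
      _ = ∫ x in (0:ℝ)..1, -E * h x := by
          apply intervalIntegral.integral_congr
          intro x _
          exact h3 x
      _ = -E * ∫ x in (0:ℝ)..1, h x := by
          rw [intervalIntegral.integral_const_mul]
  have hEne : E ≠ -1 := by
    intro hcon
    have hsq : Complex.exp ((2 * (Real.pi : ℂ) * Complex.I * (k : ℂ) * (c : ℂ))
        + (2 * (Real.pi : ℂ) * Complex.I * (k : ℂ) * (c : ℂ))) = 1 := by
      rw [Complex.exp_add, ← hE, hcon]
      ring
    rw [Complex.exp_eq_one_iff] at hsq
    obtain ⟨t, ht⟩ := hsq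
    have hcC : ((c : ℝ) : ℂ) = 1 / (2 * (M : ℂ)) := by
      rw [hc]; push_cast; ring
    rw [hcC] at ht
    have hMC : (M : ℂ) ≠ 0 := by exact_mod_cast hM0
    have hpiC : (Real.pi : ℂ) ≠ 0 := by exact_mod_cast Real.pi_ne_zero
    have hkC : (k : ℂ) = t * M := by
      field_simp at ht
      have h4 : (4 : ℂ) * Real.pi * Complex.I * (k : ℂ)
          = 4 * Real.pi * Complex.I * ((t : ℂ) * M) := by
        linear_combination (2 * (Real.pi : ℂ) * Complex.I) * ht
      have h2 : (4 : ℂ) * Real.pi * Complex.I ≠ 0 := by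
        simp [Complex.I_ne_zero, hpiC]
      exact mul_left_cancel₀ h2 h4
    have hkZ : k = t * M := by exact_mod_cast hkC
    have ht0 : t = 0 := by
      by_contra ht0
      have h1 : 1 ≤ |t| := Int.one_le_abs ht0
      have hM' : (0 : ℤ) < (M : ℤ) := by exact_mod_cast hM
      have h2 : (M : ℤ) ≤ |t| * M := le_mul_of_one_le_left hM'.le h1
      rw [hkZ, abs_mul, abs_of_nonneg hM'.le] at hk
      linarith
    have hk0 : k = 0 := by rw [ht0] at hkZ; simpa using hkZ
    rw [hE, hk0] at hcon
    simp at hcon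
    norm_num at hcon
  have hE1 : (1 : ℂ) + E ≠ 0 := by
    intro hcon
    apply hEne
    linear_combination hcon
  have : (1 + E) * ∫ x in (0:ℝ)..1, h x = 0 := by
    linear_combination key
  rcases mul_eq_zero.mp this with h | h
  · exact absurd h hE1
  · exact h

lemma alt_sum (g : ℕ → ℝ) (m : ℕ) :
    ∑ j ∈ Finset.range (2 * m), (-1 : ℝ) ^ j * (g (j + 1) - g j)
      = -2 * ∑ j ∈ Finset.range (2 * m), (-1 : ℝ) ^ j * g j + g 0 - g (2 * m) := by
  induction m with
  | zero => simp
  | succ m ih =>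
    have he : (-1 : ℝ) ^ (2 * m) = 1 := Even.neg_one_pow ⟨m, by ring⟩
    have ho : (-1 : ℝ) ^ (2 * m + 1) = -1 := by rw [pow_succ, he]; ring
    have h1 : 2 * (m + 1) = (2 * m + 1) + 1 := by ring
    rw [h1, Finset.sum_range_succ, Finset.sum_range_succ,
      Finset.sum_range_succ (f := fun j => (-1 : ℝ) ^ j * g j),
      Finset.sum_range_succ (f := fun j => (-1 : ℝ) ^ j * g j), ih, he, ho]
    ring
lemma sum_alt_split (h : ℕ → ℝ) (m : ℕ) :
    ∑ j ∈ Finset.range (2 * m), (-1 : ℝ) ^ j * h j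
      = ∑ i ∈ Finset.range m, h (2 * i) - ∑ i ∈ Finset.range m, h (2 * i + 1) := by
  induction m with
  | zero => simp
  | succ m ih =>
    have he : (-1 : ℝ) ^ (2 * m) = 1 := Even.neg_one_pow ⟨m, by ring⟩
    have ho : (-1 : ℝ) ^ (2 * m + 1) = -1 := by rw [pow_succ, he]; ring
    have h1 : 2 * (m + 1) = (2 * m + 1) + 1 := by ring
    rw [h1, Finset.sum_range_succ, Finset.sum_range_succ, ih,
      Finset.sum_range_succ (f := fun i => h (2 * i)),
      Finset.sum_range_succ (f := fun i => h (2 * i + 1)), he, ho]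
    ring

lemma sqw_bper_integral (n M : ℕ) (hM : 0 < M) (θ : ℝ) (hθ0 : 0 ≤ θ) (hθ1 : θ ≤ 1 / 2) :
    ∫ x in (0:ℝ)..1, bernoulliPer (n + 1) x * sqw M θ x
      = eulerPoly (n + 1) θ / (2 * (M : ℝ)) ^ (n + 1) := by
  have hM0 : (0 : ℝ) < (M : ℝ) := by exact_mod_cast hM
  have h2M : (0 : ℝ) < 2 * (M : ℝ) := by positivity
  set f : ℝ → ℝ := fun x => bernoulliPer (n + 1) x * sqw M θ x with hf
  obtain ⟨C, hC⟩ := bper_bound (n + 1)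
  have hfint : ∀ c d : ℝ, IntervalIntegrable f volume c d := by
    intro c d
    apply II_of_bdd (C := C)
    · exact ((bper_measurable (n + 1)).mul (sqw_measurable M θ)).aestronglyMeasurable
    · intro x
      rw [hf]
      simp only [norm_mul]
      calc ‖bernoulliPer (n + 1) x‖ * ‖sqw M θ x‖
          = ‖bernoulliPer (n + 1) x‖ := by rw [Real.norm_eq_abs (sqw M θ x), sqw_abs, mul_one]
        _ ≤ C := hC x
  have hper : Function.Periodic f 1 := by
    intro x
    rw [hf]
    simp only
    rw [bper_periodic (n + 1) x, sqw_periodic M θ x]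
  set a : ℝ := θ / (2 * (M : ℝ)) with ha
  set xj : ℕ → ℝ := fun j => θ / (2 * (M : ℝ)) + (j : ℝ) / (2 * (M : ℝ)) with hxj
  -- move to the interval [a, a+1]
  have step1 : ∫ x in (0:ℝ)..1, f x = ∫ x in a..(a + 1), f x := by
    have := hper.intervalIntegral_add_eq 0 a
    simpa using this
  -- split into subintervals
  have hxj_mono : ∀ j : ℕ, xj j ≤ xj (j + 1) := by
    intro j
    rw [hxj]
    simp only
    have : (j : ℝ) ≤ (j : ℝ) + 1 := by linarith
    push_cast
    gcongr
  have hxj0 : xj 0 = a := by rw [hxj]; simp [ha]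
  have hxj2M : xj (2 * M) = a + 1 := by
    rw [hxj, ha]
    push_cast
    field_simp
  have step2 : ∫ x in a..(a + 1), f x
      = ∑ j ∈ Finset.range (2 * M), ∫ x in (xj j)..(xj (j + 1)), f x := by
    rw [show a + 1 = xj (2 * M) from hxj2M.symm, show a = xj 0 from hxj0.symm]
    exact (intervalIntegral.sum_integral_adjacent_intervals
      (fun k _ => hfint (xj k) (xj (k + 1)))).symm
  -- each piece
  have step3 : ∀ j : ℕ, ∫ x in (xj j)..(xj (j + 1)), f x
      = (-1 : ℝ) ^ j *
        ((bernoulliPer (n + 2) (xj (j + 1)) - bernoulliPer (n + 2) (xj j)) / ((n : ℝ) + 2)) := by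
    intro j
    have hcongr : ∫ x in (xj j)..(xj (j + 1)), f x
        = ∫ x in (xj j)..(xj (j + 1)), (-1 : ℝ) ^ j * bernoulliPer (n + 1) x := by
      apply intervalIntegral.integral_congr_ae
      have h0 : ∀ᵐ (x : ℝ) ∂volume, x ∉ ({xj (j + 1)} : Set ℝ) :=
        MeasureTheory.compl_mem_ae_iff.mpr (MeasureTheory.measure_singleton _)
      filter_upwards [h0] with x hx hxI
      rw [Set.uIoc_of_le (hxj_mono j)] at hxI
      have hlt : x < xj (j + 1) := lt_of_le_of_ne hxI.2 (by simpa using hx)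
      have hval : sqw M θ x = (-1 : ℝ) ^ j := by
        apply sqw_value M hM θ j (le_of_lt ?_) ?_
        · exact hxI.1
        · rw [hxj] at hlt
          push_cast at hlt ⊢
          convert hlt using 2
      rw [hf]
      simp only
      rw [hval]
      ring
    rw [hcongr, intervalIntegral.integral_const_mul,
      bper_integral n (hxj_mono j)]
  rw [step1, step2]
  rw [Finset.sum_congr rfl (fun j _ => step3 j)]
  -- alternate sum manipulation
  set g : ℕ → ℝ := fun j => bernoulliPer (n + 2) (xj j) with hg
  have hsum1 : ∑ j ∈ Finset.range (2 * M),
      (-1 : ℝ) ^ j * ((g (j + 1) - g j) / ((n : ℝ) + 2))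
      = (1 / ((n : ℝ) + 2)) * ∑ j ∈ Finset.range (2 * M), (-1 : ℝ) ^ j * (g (j + 1) - g j) := by
    rw [Finset.mul_sum]
    apply Finset.sum_congr rfl
    intro j _
    ring
  rw [hsum1, alt_sum g (M)]
  have hgper : g (2 * M) = g 0 := by
    rw [hg]
    simp only
    rw [hxj2M, ← hxj0]
    have := bper_periodic (n + 2) (xj 0)
    rw [hxj0] at this ⊢
    exact this
  rw [hgper]
  -- the sum over values of the polynomial
  have hrange : ∀ j : ℕ, j < 2 * M → (0 : ℝ) ≤ xj j ∧ xj j < 1 := by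
    intro j hj
    constructor
    · rw [hxj]; positivity
    · rw [hxj]
      simp only
      rw [← add_div, div_lt_one h2M]
      have : (j : ℝ) ≤ 2 * (M : ℝ) - 1 := by
        have : (j : ℝ) + 1 ≤ 2 * M := by exact_mod_cast hj
        linarith
      linarith
  have hsum2 : ∑ j ∈ Finset.range (2 * M), (-1 : ℝ) ^ j * g j
      = ∑ j ∈ Finset.range (2 * M), (-1 : ℝ) ^ j * bernoulliPoly (n + 2) (xj j) := by
    apply Finset.sum_congr rfl
    intro j hj
    obtain ⟨l, r⟩ := hrange j (Finset.mem_range.mp hj)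
    rw [hg]
    simp only
    rw [bper_eq (n + 2) l r]
  rw [hsum2, sum_alt_split (fun j => bernoulliPoly (n + 2) (xj j)) M]
  -- identify with Raabe sums
  have heven : ∑ i ∈ Finset.range M, bernoulliPoly (n + 2) (xj (2 * i))
      = ∑ i ∈ Finset.range M, bernoulliPoly (n + 2) (a + (i : ℝ) / M) := by
    apply Finset.sum_congr rfl
    intro i _
    congr 1
    rw [hxj, ha]
    push_cast
    field_simp
  have hodd : ∑ i ∈ Finset.range M, bernoulliPoly (n + 2) (xj (2 * i + 1))
      = ∑ i ∈ Finset.range M, bernoulliPoly (n + 2) ((a + 1 / (2 * (M : ℝ))) + (i : ℝ) / M) := by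
    apply Finset.sum_congr rfl
    intro i _
    congr 1
    rw [hxj, ha]
    push_cast
    field_simp
    ring
  rw [heven, hodd]
  have hr1 := raabe M hM (n + 2) a
  have hr2 := raabe M hM (n + 2) (a + 1 / (2 * (M : ℝ)))
  have harg1 : (M : ℝ) * a = θ / 2 := by rw [ha]; field_simp
  have harg2 : (M : ℝ) * (a + 1 / (2 * (M : ℝ))) = (θ + 1) / 2 := by
    rw [ha]; field_simp
  rw [harg1] at hr1
  rw [harg2] at hr2
  -- final algebra
  have hMn : (M : ℝ) ^ (n + 2) ≠ 0 := by positivity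
  have hS1 : ∑ i ∈ Finset.range M, bernoulliPoly (n + 2) (a + (i : ℝ) / M)
      = (M : ℝ) * bernoulliPoly (n + 2) (θ / 2) / (M : ℝ) ^ (n + 2) := by
    rw [eq_div_iff hMn]
    linear_combination hr1
  have hS2 : ∑ i ∈ Finset.range M, bernoulliPoly (n + 2) ((a + 1 / (2 * (M : ℝ))) + (i : ℝ) / M)
      = (M : ℝ) * bernoulliPoly (n + 2) ((θ + 1) / 2) / (M : ℝ) ^ (n + 2) := by
    rw [eq_div_iff hMn]
    linear_combination hr2
  rw [hS2] at hodd ⊢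
  rw [hS1, eulerPoly]
  have hidx : n + 1 + 1 = n + 2 := rfl
  simp only [hidx]
  push_cast
  field_simp
  ring

theorem L1_lower_bound (n N : ℕ) (hn : 1 ≤ n)
    (W : ℝ → ℂ) (hW : IsTrigPoly N W) :
    (∫ x in (0 : ℝ)..1, ‖W x - (bernoulliPer (n + 1) x : ℂ)‖) ≥
      |eulerPoly (n + 1) (theta n)| / (2 * (N : ℝ) + 2) ^ (n + 1) := by
  obtain ⟨c, hc⟩ := hW
  set M : ℕ := N + 1 with hMdef
  have hM : 0 < M := Nat.succ_pos N
  have hM0 : (0 : ℝ) < (M : ℝ) := by exact_mod_cast hM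
  set θ : ℝ := theta n with hθdef
  have hθ0 : 0 ≤ θ := by
    rw [hθdef, theta]; split <;> norm_num
  have hθ1 : θ ≤ 1 / 2 := by
    rw [hθdef, theta]; split <;> norm_num
  set e : ℤ → ℝ → ℂ := fun k x =>
    Complex.exp (2 * (Real.pi : ℂ) * Complex.I * (k : ℂ) * (x : ℂ)) with he
  -- orthogonality to W
  have hWzero : ∫ x in (0:ℝ)..1, (sqw M θ x : ℂ) * W x = 0 := by
    have hcongr : ∀ x : ℝ, (sqw M θ x : ℂ) * W x
        = ∑ k ∈ Finset.Icc (-(N : ℤ)) (N : ℤ), (c k * ((sqw M θ x : ℂ) * e k x)) := by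
      intro x
      rw [hc x, Finset.mul_sum]
      apply Finset.sum_congr rfl
      intro k _
      rw [he]
      ring
    rw [intervalIntegral.integral_congr (fun x _ => hcongr x)]
    rw [intervalIntegral.integral_finset_sum]
    · apply Finset.sum_eq_zero
      intro k hk
      rw [intervalIntegral.integral_const_mul]
      have habs : |k| < (M : ℤ) := by
        rw [Finset.mem_Icc] at hk
        have : |k| ≤ (N : ℤ) := abs_le.mpr hk
        omega
      rw [he]
      rw [sqw_orthogonal M hM θ k habs, mul_zero]
    · intro k _
      apply IntervalIntegrable.const_mul
      apply sqw_exp_II M θ (e k) ?_ (C := 1) ?_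
      · rw [he]
        apply Complex.continuous_exp.comp
        continuity
      · intro x
        rw [he]
        exact le_of_eq (exp_unit_norm x k)
  -- value on the Bernoulli function
  have hBval : ∫ x in (0:ℝ)..1, (sqw M θ x : ℂ) * (bernoulliPer (n + 1) x : ℂ)
      = ((eulerPoly (n + 1) θ / (2 * (M : ℝ)) ^ (n + 1) : ℝ) : ℂ) := by
    have h1 : ∀ x : ℝ, (sqw M θ x : ℂ) * (bernoulliPer (n + 1) x : ℂ)
        = ((bernoulliPer (n + 1) x * sqw M θ x : ℝ) : ℂ) := by
      intro x
      push_cast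
      ring
    rw [intervalIntegral.integral_congr (fun x _ => h1 x)]
    rw [intervalIntegral.integral_ofReal]
    rw [sqw_bper_integral n M hM θ hθ0 hθ1]
  -- integrability
  obtain ⟨C, hC⟩ := bper_bound (n + 1)
  have hint1 : IntervalIntegrable (fun x => (sqw M θ x : ℂ) * W x) volume 0 1 := by
    apply sqw_exp_II M θ W ?_ (C := ∑ k ∈ Finset.Icc (-(N : ℤ)) (N : ℤ), ‖c k‖) ?_
    · have hWeq := funext hc
      rw [hWeq]
      apply continuous_finset_sum
      intro k _
      apply continuous_const.mul
      apply Complex.continuous_exp.comp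
      continuity
    · intro x
      rw [hc x]
      refine (norm_sum_le _ _).trans ?_
      apply Finset.sum_le_sum
      intro k _
      rw [norm_mul]
      calc ‖c k‖ * ‖Complex.exp (2 * (Real.pi : ℂ) * Complex.I * (k : ℂ) * (x : ℂ))‖
          = ‖c k‖ := by rw [exp_unit_norm x k, mul_one]
        _ ≤ ‖c k‖ := le_rfl
  have hint2 : IntervalIntegrable
      (fun x => (sqw M θ x : ℂ) * (bernoulliPer (n + 1) x : ℂ)) volume 0 1 := by
    apply II_of_bdd (C := C)
    · exact ((Complex.measurable_ofReal.comp (sqw_measurable M θ)).mul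
        (Complex.measurable_ofReal.comp (bper_measurable (n + 1)))).aestronglyMeasurable
    · intro x
      rw [norm_mul, Complex.norm_real, Complex.norm_real, Real.norm_eq_abs (sqw M θ x), sqw_abs,
        one_mul]
      exact hC x
  -- combine
  have hsplit : ∫ x in (0:ℝ)..1, (sqw M θ x : ℂ) * (W x - (bernoulliPer (n + 1) x : ℂ))
      = -((eulerPoly (n + 1) θ / (2 * (M : ℝ)) ^ (n + 1) : ℝ) : ℂ) := by
    have h1 : ∀ x : ℝ, (sqw M θ x : ℂ) * (W x - (bernoulliPer (n + 1) x : ℂ))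
        = (sqw M θ x : ℂ) * W x - (sqw M θ x : ℂ) * (bernoulliPer (n + 1) x : ℂ) := by
      intro x; ring
    rw [intervalIntegral.integral_congr (fun x _ => h1 x),
      intervalIntegral.integral_sub hint1 hint2, hWzero, hBval, zero_sub]
  have hnorm : ‖∫ x in (0:ℝ)..1, (sqw M θ x : ℂ) * (W x - (bernoulliPer (n + 1) x : ℂ))‖
      = |eulerPoly (n + 1) θ| / (2 * (M : ℝ)) ^ (n + 1) := by
    rw [hsplit, norm_neg, Complex.norm_real, Real.norm_eq_abs, abs_div,
      abs_of_pos (show (0:ℝ) < (2 * (M : ℝ)) ^ (n + 1) by positivity)]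
  have hle := intervalIntegral.norm_integral_le_integral_norm
    (f := fun x => (sqw M θ x : ℂ) * (W x - (bernoulliPer (n + 1) x : ℂ)))
    (μ := volume) (a := (0:ℝ)) (b := 1) (by norm_num)
  rw [hnorm] at hle
  have heqnorm : ∫ x in (0:ℝ)..1, ‖(sqw M θ x : ℂ) * (W x - (bernoulliPer (n + 1) x : ℂ))‖
      = ∫ x in (0:ℝ)..1, ‖W x - (bernoulliPer (n + 1) x : ℂ)‖ := by
    apply intervalIntegral.integral_congr
    intro x _
    beta_reduce
    rw [norm_mul, Complex.norm_real, Real.norm_eq_abs (sqw M θ x), sqw_abs, one_mul]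
  rw [heqnorm] at hle
  have hM2 : (2 * (N : ℝ) + 2) = 2 * (M : ℝ) := by
    rw [hMdef]; push_cast; ring
  rw [ge_iff_le, hM2]
  exact hle
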